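/- Let n ≥ 2, let Ξ = T_{V₊} ∩ S^n_ℂ, let ∂Ξ = closure(Ξ) \ Ξ be its boundary in S^n_ℂ, let dS^n = S^n_ℂ ∩ iV (de Sitter space), and set ξ⁰ = e₀ + i e_n. Then ∂Ξ is the disjoint union of dS^n and the orbit 𝒪 = G^c·(ξ⁰ + e_{n−1}); moreover G^c acts transitively on dS^n, namely dS^n = G^c·e_{n−1}, and G^c acts transitively on the forward light rays: L^n₊ = G^c·ξ⁰. (Paper: Lemma 3.7 together with equation (eq:conic).) -/

import Mathlib

open MeasureTheory

noncomputable section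

/-- Standard complex bilinear form on ℂ^{n+1}. -/
def dotC (n : ℕ) (z w : Fin (n+1) → ℂ) : ℂ := ∑ j, z j * w j

/-- The real form V = ℝe₀ ⊕ iℝⁿ. -/
def memV (n : ℕ) (z : Fin (n+1) → ℂ) : Prop :=
  (z 0).im = 0 ∧ ∀ j, j ≠ 0 → (z j).re = 0

/-- The open forward light cone V₊ ⊆ V. -/
def memVplus (n : ℕ) (z : Fin (n+1) → ℂ) : Prop :=
  memV n z ∧ 0 < (z 0).re ∧ 0 < (dotC n z z).re

/-- The tube domain T_{V₊} = V₊ + iV. -/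
def memTV (n : ℕ) (z : Fin (n+1) → ℂ) : Prop :=
  ∃ x y, memVplus n x ∧ memV n y ∧ z = x + Complex.I • y

/-- The crown Ξ = T_{V₊} ∩ S^n_ℂ. -/
def memXi (n : ℕ) (z : Fin (n+1) → ℂ) : Prop :=
  memTV n z ∧ dotC n z z = 1

/-- The forward light rays L^n₊. -/
def memLn (n : ℕ) (v : Fin (n+1) → ℂ) : Prop :=
  memV n v ∧ dotC n v v = 0 ∧ 0 < (v 0).re

/-- The hyperboloid H^n_V ⊆ V. -/
def memHn (n : ℕ) (u : Fin (n+1) → ℂ) : Prop :=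
  memV n u ∧ 0 < (u 0).re ∧ dotC n u u = 1

/-- The conjugation σ_V fixing V pointwise. -/
def sigmaV (n : ℕ) (z : Fin (n+1) → ℂ) : Fin (n+1) → ℂ :=
  fun j => if j = 0 then (starRingEnd ℂ) (z j) else -((starRingEnd ℂ) (z j))

/-- The conjugation σ_E fixing ℝ^{n+1} pointwise. -/
def sigmaE (n : ℕ) (z : Fin (n+1) → ℂ) : Fin (n+1) → ℂ := fun j => (starRingEnd ℂ) (z j)

/-- Standard basis vectors of ℂ^{n+1}. -/
def stdC (n : ℕ) (k : Fin (n+1)) : Fin (n+1) → ℂ := fun j => if j = k then 1 else 0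

/-- The group G^c ≅ O(1,n)(ℝ)^↑, realized as complex-linear maps preserving the
bilinear form, preserving V, and positively oriented in time. -/
def isGc (n : ℕ) (g : (Fin (n+1) → ℂ) →ₗ[ℂ] (Fin (n+1) → ℂ)) : Prop :=
  Function.Bijective g ∧ (∀ z w, dotC n (g z) (g w) = dotC n z w) ∧
  (∀ z, memV n z → memV n (g z)) ∧ 0 < ((g (stdC n 0)) 0).re

/-- ξ_u = e₀ + iu for u ∈ ℝⁿ. -/
def xiC (n : ℕ) (u : Fin n → ℝ) : Fin (n+1) → ℂ :=
  Fin.cons 1 (fun j => Complex.I * (u j : ℂ))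

/-- The unit sphere S^{n-1} ⊆ ℝⁿ. -/
def unitSph (n : ℕ) (u : Fin n → ℝ) : Prop := ∑ j, u j ^ 2 = 1

/-- The action of G^c on the sphere S^{n-1}, defined via g ξ_u = j(g,u) ξ_{g.u}. -/
def gact (n : ℕ) (g : (Fin (n+1) → ℂ) →ₗ[ℂ] (Fin (n+1) → ℂ)) (u : Fin n → ℝ) : Fin n → ℝ :=
  fun j => ((g (xiC n u)) j.succ).im / ((g (xiC n u)) 0).re

/-- μ is the rotation-invariant Borel probability measure on S^{n-1} ⊆ ℝⁿ. -/
def IsSphereMeasure (n : ℕ) (μ : Measure (Fin n → ℝ)) : Prop :=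
  IsProbabilityMeasure μ ∧ μ {u | unitSph n u}ᶜ = 0 ∧
  ∀ g : Matrix.orthogonalGroup (Fin n) ℝ,
    μ.map (fun u => (g : Matrix (Fin n) (Fin n) ℝ).mulVec u) = μ

/-- ρ = (n-1)/2 as a complex number. -/
def rhoC (n : ℕ) : ℂ := ((n : ℂ) - 1) / 2

/-- λ_m = √(ρ²−m²) for m ≤ ρ and i√(m²−ρ²) for m ≥ ρ. -/
def lamOf (n : ℕ) (m : ℝ) : ℂ :=
  if m ≤ ((n : ℝ) - 1) / 2 then (Real.sqrt ((((n : ℝ) - 1) / 2) ^ 2 - m ^ 2) : ℂ)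
  else Complex.I * (Real.sqrt (m ^ 2 - (((n : ℝ) - 1) / 2) ^ 2) : ℂ)


/-- The space iV = iℝe₀ ⊕ ℝⁿ. -/
def memiV (n : ℕ) (z : Fin (n+1) → ℂ) : Prop :=
  (z 0).re = 0 ∧ ∀ j, j ≠ 0 → (z j).im = 0

/-- The orbit of a point under G^c. -/
def orbitGc (n : ℕ) (s : Fin (n+1) → ℂ) : Set (Fin (n+1) → ℂ) :=
  {z | ∃ g : (Fin (n+1) → ℂ) →ₗ[ℂ] (Fin (n+1) → ℂ), isGc n g ∧ z = g s}

variable {n : ℕ}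

lemma dotC_add_left (z w v : Fin (n+1) → ℂ) : dotC n (z + w) v = dotC n z v + dotC n w v := by
  simp [dotC, add_mul, Finset.sum_add_distrib]

lemma dotC_add_right (z w v : Fin (n+1) → ℂ) : dotC n z (w + v) = dotC n z w + dotC n z v := by
  simp [dotC, mul_add, Finset.sum_add_distrib]

lemma dotC_smul_left (c : ℂ) (z w : Fin (n+1) → ℂ) : dotC n (c • z) w = c * dotC n z w := by
  simp [dotC, Finset.mul_sum, mul_assoc]

lemma dotC_smul_right (c : ℂ) (z w : Fin (n+1) → ℂ) : dotC n z (c • w) = c * dotC n z w := by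
  simp [dotC, Finset.mul_sum]; exact Finset.sum_congr rfl fun j _ => by ring

lemma dotC_comm (z w : Fin (n+1) → ℂ) : dotC n z w = dotC n w z := by
  simp [dotC, mul_comm]

lemma dotC_stdC_right (z : Fin (n+1) → ℂ) (k : Fin (n+1)) : dotC n z (stdC n k) = z k := by
  simp [dotC, stdC]

lemma dotC_stdC_left (z : Fin (n+1) → ℂ) (k : Fin (n+1)) : dotC n (stdC n k) z = z k := by
  simp [dotC, stdC]

lemma dotC_split (z w : Fin (n+1) → ℂ) :
    dotC n z w = z 0 * w 0 + ∑ j : Fin n, z j.succ * w j.succ := Fin.sum_univ_succ _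

lemma memV_iff (z : Fin (n+1) → ℂ) :
    memV n z ↔ (z 0).im = 0 ∧ ∀ j : Fin n, (z j.succ).re = 0 := by
  constructor
  · rintro ⟨h0, h⟩; exact ⟨h0, fun j => h _ (Fin.succ_ne_zero j)⟩
  · rintro ⟨h0, h⟩; refine ⟨h0, fun i hi => ?_⟩
    rcases Fin.eq_zero_or_eq_succ i with rfl | ⟨j, rfl⟩
    · exact absurd rfl hi
    · exact h j

lemma eq_re_ofReal {c : ℂ} (h : c.im = 0) : c = (c.re : ℂ) := by
  exact (Complex.ext_iff.2 ⟨rfl, by simp [h]⟩)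

lemma eq_I_mul_im {c : ℂ} (h : c.re = 0) : c = Complex.I * (c.im : ℂ) := by
  exact (Complex.ext_iff.2 ⟨by simp [h], by simp⟩)

lemma dotC_real_of_memV {z w : Fin (n+1) → ℂ} (hz : memV n z) (hw : memV n w) :
    dotC n z w = (((z 0).re * (w 0).re - ∑ j : Fin n, (z j.succ).im * (w j.succ).im : ℝ) : ℂ) := by
  rw [dotC_split]
  rw [memV_iff] at hz hw
  rw [eq_re_ofReal hz.1, eq_re_ofReal hw.1]
  have : ∀ j : Fin n, z j.succ * w j.succ = -(((z j.succ).im * (w j.succ).im : ℝ) : ℂ) := by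
    intro j
    rw [eq_I_mul_im (hz.2 j), eq_I_mul_im (hw.2 j)]
    push_cast
    ring_nf
    simp [Complex.I_sq]
  rw [Finset.sum_congr rfl (fun j _ => this j)]
  push_cast
  simp [Finset.sum_neg_distrib]
  ring
lemma memiV_iff (z : Fin (n+1) → ℂ) :
    memiV n z ↔ (z 0).re = 0 ∧ ∀ j : Fin n, (z j.succ).im = 0 := by
  constructor
  · rintro ⟨h0, h⟩; exact ⟨h0, fun j => h _ (Fin.succ_ne_zero j)⟩
  · rintro ⟨h0, h⟩; refine ⟨h0, fun i hi => ?_⟩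
    rcases Fin.eq_zero_or_eq_succ i with rfl | ⟨j, rfl⟩
    · exact absurd rfl hi
    · exact h j

lemma dotC_real_of_memiV {z w : Fin (n+1) → ℂ} (hz : memiV n z) (hw : memiV n w) :
    dotC n z w = ((-((z 0).im * (w 0).im) + ∑ j : Fin n, (z j.succ).re * (w j.succ).re : ℝ) : ℂ) := by
  rw [memiV_iff] at hz hw
  have h0 : z 0 * w 0 = ((-((z 0).im * (w 0).im) : ℝ) : ℂ) := by
    rw [Complex.ext_iff]
    constructor <;> simp [Complex.mul_re, Complex.mul_im, hz.1, hw.1]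
  have hj : ∀ j : Fin n, z j.succ * w j.succ = (((z j.succ).re * (w j.succ).re : ℝ) : ℂ) := by
    intro j
    rw [Complex.ext_iff]
    constructor <;> simp [Complex.mul_re, Complex.mul_im, hz.2 j, hw.2 j]
  rw [dotC_split, h0, Finset.sum_congr rfl (fun j _ => hj j)]
  push_cast
  ring

lemma dotC_re_of_memV {z w : Fin (n+1) → ℂ} (hz : memV n z) (hw : memV n w) :
    (dotC n z w).re = (z 0).re * (w 0).re - ∑ j : Fin n, (z j.succ).im * (w j.succ).im := by
  rw [dotC_real_of_memV hz hw, Complex.ofReal_re]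

lemma dotC_im_of_memV {z w : Fin (n+1) → ℂ} (hz : memV n z) (hw : memV n w) :
    (dotC n z w).im = 0 := by
  rw [dotC_real_of_memV hz hw, Complex.ofReal_im]

lemma dotC_re_zero_of_memV_memiV {z p : Fin (n+1) → ℂ} (hz : memV n z) (hp : memiV n p) :
    (dotC n z p).re = 0 := by
  rw [memV_iff] at hz; rw [memiV_iff] at hp
  have h0 : (z 0 * p 0).re = 0 := by
    rw [Complex.mul_re, hz.1, hp.1]; ring
  have h : ∀ j : Fin n, (z j.succ * p j.succ).re = 0 := by
    intro j; rw [Complex.mul_re, hz.2 j, hp.2 j]; ring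
  rw [dotC_split, Complex.add_re, h0, Complex.re_sum]
  simp [h]

lemma memV_stdC_zero : memV n (stdC n 0) := by
  rw [memV_iff]
  constructor
  · simp [stdC]
  · intro j; simp [stdC, (Fin.succ_ne_zero j)]

lemma dotC_stdC_self (k : Fin (n+1)) : dotC n (stdC n k) (stdC n k) = 1 := by
  rw [dotC_stdC_left]; simp [stdC]

/-- The key positivity ("orthochronous") lemma. -/
lemma cone_lemma {g : (Fin (n+1) → ℂ) →ₗ[ℂ] (Fin (n+1) → ℂ)} (hg : isGc n g)
    {x : Fin (n+1) → ℂ} (hx : memV n x) (hxx : 0 ≤ (dotC n x x).re) (hx0 : 0 < (x 0).re) :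
    0 < ((g x) 0).re := by
  obtain ⟨-, hform, hV, hpos⟩ := hg
  set u := g (stdC n 0) with hu
  set w := g x with hwdef
  have huV : memV n u := hV _ memV_stdC_zero
  have hwV : memV n w := hV _ hx
  have huu : dotC n u u = 1 := by rw [hform]; exact dotC_stdC_self 0
  have huw : dotC n u w = x 0 := by rw [hform]; exact dotC_stdC_left x 0
  set a := (u 0).re with ha
  set b := (w 0).re with hb
  set U := ∑ j : Fin n, (u j.succ).im * (u j.succ).im with hU
  set W := ∑ j : Fin n, (w j.succ).im * (w j.succ).im with hW
  set P := ∑ j : Fin n, (u j.succ).im * (w j.succ).im with hP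
  have hUform : a * a - U = 1 := by
    have h1 := dotC_re_of_memV huV huV
    rw [huu] at h1
    simpa using h1.symm
  have hWform : 0 ≤ b * b - W := by
    have h1 := dotC_re_of_memV hwV hwV
    have h2 : (dotC n w w).re = (dotC n x x).re := by rw [hwdef, hform]
    rw [h2] at h1
    linarith [h1 ▸ hxx]
  have hPform : a * b - P = (x 0).re := by
    have h1 := dotC_re_of_memV huV hwV
    rw [huw] at h1
    have hx0' : memV n x := hx
    rw [memV_iff] at hx0'
    rw [eq_re_ofReal hx0'.1, Complex.ofReal_re] at h1
    exact h1.symm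
  have hCS : P ^ 2 ≤ U * W := by
    have := Finset.sum_mul_sq_le_sq_mul_sq Finset.univ (fun j : Fin n => (u j.succ).im)
        (fun j : Fin n => (w j.succ).im)
    have e1 : U = ∑ j : Fin n, (u j.succ).im ^ 2 := Finset.sum_congr rfl fun j _ => (sq _).symm
    have e2 : W = ∑ j : Fin n, (w j.succ).im ^ 2 := Finset.sum_congr rfl fun j _ => (sq _).symm
    rw [e1, e2]
    exact this
  have hU0 : 0 ≤ U := Finset.sum_nonneg fun j _ => mul_self_nonneg _
  have hW0 : 0 ≤ W := Finset.sum_nonneg fun j _ => mul_self_nonneg _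
  by_contra hbneg
  push_neg at hbneg
  -- W ≤ b * b, U = a*a - 1
  have h3 : U * W ≤ U * (b * b) := mul_le_mul_of_nonneg_left (by linarith) hU0
  have h4 : P ^ 2 ≤ (a * a - 1) * (b * b) := by nlinarith
  have hab : a * b ≤ 0 := mul_nonpos_of_nonneg_of_nonpos (le_of_lt hpos) hbneg
  have hx0re : 0 < (x 0).re := hx0
  nlinarith [sq_nonneg (a * b - P), mul_pos hx0re hx0re,
    mul_nonneg (mul_nonneg (le_of_lt hpos) (neg_nonneg.2 hbneg)) (le_of_lt hx0re)]
/-! ### Generators: boosts and reflections -/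

def boostMap (n : ℕ) (t : ℝ) : (Fin (n+1) → ℂ) →ₗ[ℂ] (Fin (n+1) → ℂ) where
  toFun z := fun j =>
    if j = 0 then (Real.cosh t : ℂ) * z 0 - Complex.I * (Real.sinh t : ℂ) * z (Fin.last n)
    else if j = Fin.last n then
      Complex.I * (Real.sinh t : ℂ) * z 0 + (Real.cosh t : ℂ) * z (Fin.last n)
    else z j
  map_add' z w := by
    funext j
    simp only [Pi.add_apply]
    split_ifs <;> ring
  map_smul' c z := by
    funext j
    simp only [Pi.smul_apply, smul_eq_mul, RingHom.id_apply]
    split_ifs <;> ring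

lemma last_ne_zero (hn : 0 < n) : (Fin.last n) ≠ (0 : Fin (n+1)) := by
  simp [Fin.ext_iff]; omega

lemma boost_apply_zero (t : ℝ) (z : Fin (n+1) → ℂ) :
    boostMap n t z 0 = (Real.cosh t : ℂ) * z 0 - Complex.I * (Real.sinh t : ℂ) * z (Fin.last n) := by
  simp [boostMap]

lemma boost_apply_last (hn : 0 < n) (t : ℝ) (z : Fin (n+1) → ℂ) :
    boostMap n t z (Fin.last n)
      = Complex.I * (Real.sinh t : ℂ) * z 0 + (Real.cosh t : ℂ) * z (Fin.last n) := by
  simp [boostMap, last_ne_zero hn]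

lemma boost_apply_other (t : ℝ) (z : Fin (n+1) → ℂ) {j : Fin (n+1)}
    (h0 : j ≠ 0) (hl : j ≠ Fin.last n) : boostMap n t z j = z j := by
  simp [boostMap, h0, hl]

lemma cosh_sq_sub_sinh_sq_C (t : ℝ) :
    (Real.cosh t : ℂ) ^ 2 - (Real.sinh t : ℂ) ^ 2 = 1 := by
  rw [← Complex.ofReal_pow, ← Complex.ofReal_pow, ← Complex.ofReal_sub,
    Real.cosh_sq_sub_sinh_sq, Complex.ofReal_one]

lemma boost_boost (hn : 0 < n) (t : ℝ) (z : Fin (n+1) → ℂ) :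
    boostMap n (-t) (boostMap n t z) = z := by
  have hch := cosh_sq_sub_sinh_sq_C t
  funext j
  by_cases h : j = 0
  · subst h
    rw [boost_apply_zero, boost_apply_zero, boost_apply_last hn]
    simp only [Real.cosh_neg, Real.sinh_neg, Complex.ofReal_neg]
    linear_combination (z 0) * hch + (Real.sinh t : ℂ)^2 * (z 0) * Complex.I_sq
  · by_cases h' : j = Fin.last n
    · subst h'
      rw [boost_apply_last hn, boost_apply_last hn, boost_apply_zero]
      simp only [Real.cosh_neg, Real.sinh_neg, Complex.ofReal_neg]
      linear_combination (z (Fin.last n)) * hch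
        + (Real.sinh t : ℂ)^2 * (z (Fin.last n)) * Complex.I_sq
    · rw [boost_apply_other _ _ h h', boost_apply_other _ _ h h']

lemma boost_dot (hn : 0 < n) (t : ℝ) (z w : Fin (n+1) → ℂ) :
    dotC n (boostMap n t z) (boostMap n t w) = dotC n z w := by
  have hch := cosh_sq_sub_sinh_sq_C t
  set c := (Real.cosh t : ℂ)
  set s := (Real.sinh t : ℂ)
  set A := (c * z 0 - Complex.I * s * z (Fin.last n)) * (c * w 0 - Complex.I * s * w (Fin.last n))
    - z 0 * w 0 with hA
  set C := (Complex.I * s * z 0 + c * z (Fin.last n)) * (Complex.I * s * w 0 + c * w (Fin.last n))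
    - z (Fin.last n) * w (Fin.last n) with hC
  have key : ∀ j, boostMap n t z j * boostMap n t w j
      = z j * w j + ((if j = 0 then A else 0) + (if j = Fin.last n then C else 0)) := by
    intro j
    by_cases h : j = 0
    · subst h
      rw [boost_apply_zero, boost_apply_zero, if_pos rfl, if_neg (Ne.symm (last_ne_zero hn))]
      rw [hA]; ring
    · by_cases h' : j = Fin.last n
      · subst h'
        rw [boost_apply_last hn, boost_apply_last hn, if_neg h, if_pos rfl, hC]; ring
      · rw [boost_apply_other _ _ h h', boost_apply_other _ _ h h', if_neg h, if_neg h']; ring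
  unfold dotC
  rw [Finset.sum_congr rfl (fun j _ => key j)]
  rw [Finset.sum_add_distrib, Finset.sum_add_distrib]
  simp only [Finset.sum_ite_eq', Finset.mem_univ, if_pos]
  have hAC : A + C = 0 := by
    rw [hA, hC]
    linear_combination (z 0 * w 0 + z (Fin.last n) * w (Fin.last n)) * hch
      + s^2 * (z 0 * w 0 + z (Fin.last n) * w (Fin.last n)) * Complex.I_sq
  linear_combination hAC

lemma boost_memV (hn : 0 < n) (t : ℝ) {z : Fin (n+1) → ℂ} (hz : memV n z) :
    memV n (boostMap n t z) := by
  have h0im : (z 0).im = 0 := hz.1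
  have hlre : (z (Fin.last n)).re = 0 := hz.2 _ (last_ne_zero hn)
  constructor
  · rw [boost_apply_zero]
    simp [Complex.sub_im, Complex.mul_im, Complex.mul_re, h0im, hlre]
  · intro j hj
    by_cases h' : j = Fin.last n
    · subst h'
      rw [boost_apply_last hn]
      simp [Complex.add_re, Complex.mul_re, Complex.mul_im, h0im, hlre]
    · rw [boost_apply_other _ _ hj h']
      exact hz.2 j hj

lemma isGc_boost (hn : 0 < n) (t : ℝ) : isGc n (boostMap n t) := by
  refine ⟨?_, boost_dot hn t, fun z hz => boost_memV hn t hz, ?_⟩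
  · apply Function.bijective_iff_has_inverse.2
    exact ⟨boostMap n (-t), fun z => boost_boost hn t z,
      fun z => by have := boost_boost hn (-t) z; rwa [neg_neg] at this⟩
  · rw [boost_apply_zero]
    have h1 : stdC n 0 0 = 1 := by simp [stdC]
    have h2 : stdC n 0 (Fin.last n) = 0 := by simp [stdC, last_ne_zero hn]
    rw [h1, h2]
    simp [Real.cosh_pos]
/-! ### Reflections -/

def reflMap (n : ℕ) (u : Fin n → ℝ) : (Fin (n+1) → ℂ) →ₗ[ℂ] (Fin (n+1) → ℂ) where
  toFun z := fun j =>
    if h : j = 0 then z 0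
    else z j - ((2 / (∑ k, u k ^ 2) : ℝ) : ℂ) * (∑ k, (u k : ℂ) * z k.succ) * (u (j.pred h) : ℂ)
  map_add' z w := by
    funext j
    by_cases h : j = 0
    · simp [h]
    · simp only [dif_neg h, Pi.add_apply]
      have : (∑ k, (u k : ℂ) * (z k.succ + w k.succ))
          = (∑ k, (u k : ℂ) * z k.succ) + ∑ k, (u k : ℂ) * w k.succ := by
        rw [← Finset.sum_add_distrib]
        exact Finset.sum_congr rfl fun k _ => by ring
      rw [this]; ring
  map_smul' c z := by
    funext j
    by_cases h : j = 0
    · simp [h]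
    · simp only [dif_neg h, Pi.smul_apply, smul_eq_mul, RingHom.id_apply]
      have : (∑ k, (u k : ℂ) * (c * z k.succ)) = c * ∑ k, (u k : ℂ) * z k.succ := by
        rw [Finset.mul_sum]
        exact Finset.sum_congr rfl fun k _ => by ring
      rw [this]; ring

lemma reflMap_apply_zero (u : Fin n → ℝ) (z : Fin (n+1) → ℂ) : reflMap n u z 0 = z 0 := by
  simp [reflMap]

lemma reflMap_apply_succ (u : Fin n → ℝ) (z : Fin (n+1) → ℂ) (j : Fin n) :
    reflMap n u z j.succ
      = z j.succ - ((2 / (∑ k, u k ^ 2) : ℝ) : ℂ) * (∑ k, (u k : ℂ) * z k.succ) * (u j : ℂ) := by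
  have h : (j.succ : Fin (n+1)) ≠ 0 := Fin.succ_ne_zero j
  simp [reflMap, h, Fin.pred_succ]

lemma reflMap_of_zero {u : Fin n → ℝ} (hu : ∀ k, u k = 0) (z : Fin (n+1) → ℂ) :
    reflMap n u z = z := by
  funext j
  rcases Fin.eq_zero_or_eq_succ j with rfl | ⟨i, rfl⟩
  · exact reflMap_apply_zero u z
  · rw [reflMap_apply_succ, hu i]
    simp

lemma sumQ_pos {u : Fin n → ℝ} (hu : ¬ ∀ k, u k = 0) : 0 < ∑ k, u k ^ 2 := by
  push_neg at hu
  obtain ⟨k, hk⟩ := hu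
  exact Finset.sum_pos' (fun i _ => sq_nonneg _) ⟨k, Finset.mem_univ k, by positivity⟩

lemma sumQ_cast (u : Fin n → ℝ) :
    (∑ k, (u k : ℂ) * (u k : ℂ)) = ((∑ k, u k ^ 2 : ℝ) : ℂ) := by
  push_cast
  exact Finset.sum_congr rfl fun k _ => (sq _).symm

lemma refl_pair_eq_neg {u : Fin n → ℝ} (hu : ¬ ∀ k, u k = 0) (z : Fin (n+1) → ℂ) :
    (∑ k, (u k : ℂ) * (reflMap n u z) k.succ) = -∑ k, (u k : ℂ) * z k.succ := by
  have hQ : ((∑ k, u k ^ 2 : ℝ) : ℂ) ≠ 0 := by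
    exact_mod_cast (sumQ_pos hu).ne'
  have expand : ∀ k : Fin n, (u k : ℂ) * (reflMap n u z) k.succ
      = (u k : ℂ) * z k.succ
        - (((2 / (∑ k, u k ^ 2) : ℝ) : ℂ) * (∑ k, (u k : ℂ) * z k.succ)) * ((u k : ℂ) * (u k : ℂ)) := by
    intro k
    rw [reflMap_apply_succ]
    ring
  rw [Finset.sum_congr rfl (fun k _ => expand k), Finset.sum_sub_distrib, ← Finset.mul_sum,
    sumQ_cast, Complex.ofReal_div]
  push_cast
  have hQ2 : (∑ x : Fin n, ((u x : ℝ) : ℂ) ^ 2) ≠ 0 := by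
    have : (∑ x : Fin n, ((u x : ℝ) : ℂ) ^ 2) = ((∑ k, u k ^ 2 : ℝ) : ℂ) := by push_cast; rfl
    rw [this]; exact hQ
  field_simp
  ring

lemma refl_refl (u : Fin n → ℝ) (z : Fin (n+1) → ℂ) : reflMap n u (reflMap n u z) = z := by
  by_cases hu : ∀ k, u k = 0
  · rw [reflMap_of_zero hu, reflMap_of_zero hu]
  · have hQ : ((∑ k, u k ^ 2 : ℝ) : ℂ) ≠ 0 := by exact_mod_cast (sumQ_pos hu).ne'
    funext j
    rcases Fin.eq_zero_or_eq_succ j with rfl | ⟨i, rfl⟩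
    · rw [reflMap_apply_zero, reflMap_apply_zero]
    · rw [reflMap_apply_succ, refl_pair_eq_neg hu, reflMap_apply_succ]
      ring

lemma refl_dot (u : Fin n → ℝ) (z w : Fin (n+1) → ℂ) :
    dotC n (reflMap n u z) (reflMap n u w) = dotC n z w := by
  by_cases hu : ∀ k, u k = 0
  · rw [reflMap_of_zero hu, reflMap_of_zero hu]
  · have hQR : (∑ k, u k ^ 2 : ℝ) ≠ 0 := (sumQ_pos hu).ne'
    have hQ : ((∑ k, u k ^ 2 : ℝ) : ℂ) ≠ 0 := by exact_mod_cast hQR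
    rw [dotC_split, dotC_split, reflMap_apply_zero, reflMap_apply_zero]
    congr 1
    set c := ((2 / (∑ k, u k ^ 2) : ℝ) : ℂ) with hc
    set Pz := ∑ k, (u k : ℂ) * z k.succ with hPz
    set Pw := ∑ k, (u k : ℂ) * w k.succ with hPw
    have expand : ∀ j : Fin n, (reflMap n u z) j.succ * (reflMap n u w) j.succ
        = z j.succ * w j.succ - (c * Pz) * ((u j : ℂ) * w j.succ)
          - (c * Pw) * ((u j : ℂ) * z j.succ) + (c * c * Pz * Pw) * ((u j : ℂ) * (u j : ℂ)) := by
      intro j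
      rw [reflMap_apply_succ, reflMap_apply_succ, ← hc, ← hPz, ← hPw]
      ring
    rw [Finset.sum_congr rfl (fun j _ => expand j), Finset.sum_add_distrib,
      Finset.sum_sub_distrib, Finset.sum_sub_distrib, ← Finset.mul_sum, ← Finset.mul_sum,
      ← Finset.mul_sum, sumQ_cast, ← hPz, ← hPw]
    rw [hc, Complex.ofReal_div]
    push_cast
    have hQ2 : (∑ x : Fin n, ((u x : ℝ) : ℂ) ^ 2) ≠ 0 := by
      have : (∑ x : Fin n, ((u x : ℝ) : ℂ) ^ 2) = ((∑ k, u k ^ 2 : ℝ) : ℂ) := by push_cast; rfl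
      rw [this]; exact hQ
    field_simp
    ring

lemma refl_memV (u : Fin n → ℝ) {z : Fin (n+1) → ℂ} (hz : memV n z) : memV n (reflMap n u z) := by
  rw [memV_iff] at hz ⊢
  refine ⟨by rw [reflMap_apply_zero]; exact hz.1, fun j => ?_⟩
  rw [reflMap_apply_succ]
  have hPre : (∑ k, (u k : ℂ) * z k.succ).re = 0 := by
    rw [Complex.re_sum]
    apply Finset.sum_eq_zero
    intro k _
    rw [Complex.mul_re, hz.2 k]
    simp
  have hre : ((((2 / (∑ k, u k ^ 2) : ℝ) : ℂ)) * (∑ k, (u k : ℂ) * z k.succ) * ((u j : ℝ) : ℂ)).re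
      = 0 := by
    rw [Complex.mul_re, Complex.mul_re, Complex.mul_im, hPre]
    simp only [Complex.ofReal_re, Complex.ofReal_im]
    ring
  rw [Complex.sub_re, hz.2 j, hre]
  ring

lemma isGc_refl (u : Fin n → ℝ) : isGc n (reflMap n u) := by
  refine ⟨?_, refl_dot u, fun z hz => refl_memV u hz, ?_⟩
  · exact Function.bijective_iff_has_inverse.2 ⟨reflMap n u, refl_refl u, refl_refl u⟩
  · rw [reflMap_apply_zero]
    simp [stdC]

lemma isGc_comp {g h : (Fin (n+1) → ℂ) →ₗ[ℂ] (Fin (n+1) → ℂ)}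
    (hg : isGc n g) (hh : isGc n h) : isGc n (g ∘ₗ h) := by
  refine ⟨hg.1.comp hh.1, fun z w => ?_, fun z hz => ?_, ?_⟩
  · simp only [LinearMap.comp_apply, hg.2.1, hh.2.1]
  · exact hg.2.2.1 _ (hh.2.2.1 _ hz)
  · simp only [LinearMap.comp_apply]
    exact cone_lemma ⟨hg.1, hg.2.1, hg.2.2.1, hg.2.2.2⟩ (hh.2.2.1 _ memV_stdC_zero)
      (by rw [hh.2.1, dotC_stdC_self]; norm_num) hh.2.2.2
/-! ### Mapping properties of reflections -/

lemma refl_fix {u : Fin n → ℝ} {z : Fin (n+1) → ℂ}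
    (h : (∑ k, (u k : ℂ) * z k.succ) = 0) : reflMap n u z = z := by
  funext j
  rcases Fin.eq_zero_or_eq_succ j with rfl | ⟨i, rfl⟩
  · exact reflMap_apply_zero u z
  · rw [reflMap_apply_succ, h]
    simp

lemma refl_map_unit {a b : Fin n → ℝ} (ha : ∑ k, a k ^ 2 = 1) (hb : ∑ k, b k ^ 2 = 1)
    {z : Fin (n+1) → ℂ} {c : ℂ} (hz : ∀ k, z k.succ = c * (a k : ℂ)) (j : Fin n) :
    reflMap n (fun k => a k - b k) z j.succ = c * (b j : ℂ) := by
  set ab := ∑ k, a k * b k with hab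
  have hQval : ∑ k, (a k - b k) ^ 2 = 2 - 2 * ab := by
    have h1 : ∀ k : Fin n, (a k - b k) ^ 2 = a k ^ 2 + b k ^ 2 - 2 * (a k * b k) :=
      fun k => by ring
    rw [Finset.sum_congr rfl fun k _ => h1 k, Finset.sum_sub_distrib, Finset.sum_add_distrib,
      ha, hb, ← Finset.mul_sum]
    rw [hab]
    ring
  by_cases hQ0 : ∑ k, (a k - b k) ^ 2 = 0
  · have habk : ∀ k, a k - b k = 0 := by
      intro k
      have h1 : (a k - b k) ^ 2 = 0 :=
        (Finset.sum_eq_zero_iff_of_nonneg (fun i _ => sq_nonneg _)).1 hQ0 k (Finset.mem_univ k)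
      exact pow_eq_zero_iff two_ne_zero |>.1 h1
    rw [reflMap_of_zero habk, hz j]
    have : a j = b j := by linarith [habk j]
    rw [this]
  · have hP : (∑ k, ((a k - b k : ℝ) : ℂ) * z k.succ) = c * ((1 - ab : ℝ) : ℂ) := by
      have h1 : ∀ k : Fin n, ((a k - b k : ℝ) : ℂ) * z k.succ
          = c * ((a k * a k - a k * b k : ℝ) : ℂ) := by
        intro k; rw [hz k]; push_cast; ring
      rw [Finset.sum_congr rfl fun k _ => h1 k, ← Finset.mul_sum]
      congr 1
      rw [← Complex.ofReal_sum]
      congr 1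
      rw [Finset.sum_sub_distrib]
      have h2 : ∑ k, a k * a k = 1 := by
        rw [← ha]; exact Finset.sum_congr rfl fun k _ => (sq _).symm
      rw [h2, hab]
    have hco : ((2 / ∑ k, (a k - b k) ^ 2 : ℝ) : ℂ) * ((1 - ab : ℝ) : ℂ) = 1 := by
      rw [← Complex.ofReal_mul]
      have h1ab : (1 : ℝ) - ab ≠ 0 := by
        intro h
        apply hQ0
        rw [hQval]; linarith
      have h2ab : (2 : ℝ) - 2 * ab ≠ 0 := fun h => h1ab (by linarith)
      have : (2 / ∑ k, (a k - b k) ^ 2 : ℝ) * (1 - ab) = 1 := by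
        rw [hQval, div_mul_eq_mul_div, div_eq_one_iff_eq h2ab]
        ring
      rw [this, Complex.ofReal_one]
    rw [reflMap_apply_succ, hP, hz j]
    have e : ((2 / ∑ k, (a k - b k) ^ 2 : ℝ) : ℂ) * (c * ((1 - ab : ℝ) : ℂ))
          * ((a j - b j : ℝ) : ℂ)
        = c * (((2 / ∑ k, (a k - b k) ^ 2 : ℝ) : ℂ) * ((1 - ab : ℝ) : ℂ))
          * ((a j - b j : ℝ) : ℂ) := by ring
    rw [e, hco, mul_one]
    push_cast
    ring

/-- spatial standard basis vectors of ℝⁿ -/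
def eSp (n : ℕ) (i : Fin n) : Fin n → ℝ := fun k => if k = i then 1 else 0

lemma eSp_unit (i : Fin n) : ∑ k, eSp n i k ^ 2 = 1 := by
  simp [eSp]

lemma stdC_succ_eq (i : Fin n) (k : Fin n) :
    stdC n (i.succ) k.succ = ((eSp n i k : ℝ) : ℂ) := by
  simp only [stdC, eSp]
  by_cases h : k = i
  · simp [h]
  · have : k.succ ≠ i.succ := fun hc => h (Fin.succ_injective n hc)
    simp [this, h]

lemma stdC_succ_zero (i : Fin n) : stdC n (i.succ) 0 = 0 := by
  simp [stdC, (Fin.succ_ne_zero i).symm]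
/-! ### Normal forms -/

lemma pair_eSp (u : Fin n → ℝ) (i : Fin n) :
    (∑ k, (u k : ℂ) * ((eSp n i k : ℝ) : ℂ)) = (u i : ℂ) := by
  have h1 : ∀ k : Fin n, (u k : ℂ) * ((eSp n i k : ℝ) : ℂ)
      = if k = i then (u k : ℂ) else 0 := by
    intro k
    by_cases h : k = i <;> simp [eSp, h]
  rw [Finset.sum_congr rfl fun k _ => h1 k]
  simp

lemma xi0_succ (hn0 : 0 < n) (k : Fin n) :
    (stdC n 0 + Complex.I • stdC n (Fin.last n)) k.succ
      = Complex.I * ((eSp n ⟨n-1, by omega⟩ k : ℝ) : ℂ) := by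
  have hlast : Fin.last n = (⟨n-1, by omega⟩ : Fin n).succ := by
    simp [Fin.ext_iff]; omega
  have h0 : stdC n 0 k.succ = 0 := by simp [stdC, Fin.succ_ne_zero k]
  simp only [Pi.add_apply, Pi.smul_apply, smul_eq_mul]
  rw [hlast, stdC_succ_eq, h0]
  ring

lemma xi0_zero (hn0 : 0 < n) :
    (stdC n 0 + Complex.I • stdC n (Fin.last n)) 0 = 1 := by
  simp [stdC, (last_ne_zero hn0).symm]

lemma xi0_last (hn0 : 0 < n) :
    (stdC n 0 + Complex.I • stdC n (Fin.last n)) (Fin.last n) = Complex.I := by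
  simp [stdC, last_ne_zero hn0]

lemma boost_xi0 (hn0 : 0 < n) (t : ℝ) :
    boostMap n t (stdC n 0 + Complex.I • stdC n (Fin.last n))
      = ((Real.exp t : ℝ) : ℂ) • (stdC n 0 + Complex.I • stdC n (Fin.last n)) := by
  have hexp : (Real.exp t : ℂ) = (Real.cosh t : ℂ) + (Real.sinh t : ℂ) := by
    rw [← Complex.ofReal_add, Real.cosh_add_sinh]
  funext j
  simp only [Pi.smul_apply, smul_eq_mul]
  by_cases h : j = 0
  · subst h
    rw [boost_apply_zero, xi0_last hn0, xi0_zero hn0, hexp]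
    linear_combination (-(Real.sinh t : ℂ)) * Complex.I_sq
  · by_cases h' : j = Fin.last n
    · subst h'
      rw [boost_apply_last hn0, xi0_zero hn0, xi0_last hn0, hexp]
      ring
    · rw [boost_apply_other _ _ h h']
      have h1 : (stdC n 0 + Complex.I • stdC n (Fin.last n)) j = 0 := by
        simp [stdC, h, h']
      rw [h1, mul_zero]

/-- Normal form for forward light-like vectors. -/
lemma exists_k (hn : 2 ≤ n) {w : Fin (n+1) → ℂ} (hwV : memV n w) (hw0 : dotC n w w = 0)
    (hwpos : 0 < (w 0).re) :
    ∃ k : (Fin (n+1) → ℂ) →ₗ[ℂ] (Fin (n+1) → ℂ), isGc n k ∧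
      k (stdC n 0 + Complex.I • stdC n (Fin.last n)) = w ∧
      (w ⟨n-1, by clear hn; omega⟩ = 0 → k (stdC n ⟨n-1, by clear hn; omega⟩) = stdC n ⟨n-1, by clear hn; omega⟩) := by
  have hn0 : 0 < n := by omega
  set w0 := (w 0).re with hw0def
  have hw0ne : w0 ≠ 0 := ne_of_gt hwpos
  have hw0C : (w0 : ℂ) ≠ 0 := by exact_mod_cast hw0ne
  have hsum : ∑ k : Fin n, (w k.succ).im ^ 2 = w0 ^ 2 := by
    have h1 := dotC_re_of_memV hwV hwV
    rw [hw0] at h1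
    simp only [Complex.zero_re] at h1
    have h2 : ∀ k : Fin n, (w k.succ).im ^ 2 = (w k.succ).im * (w k.succ).im := fun k => sq _
    rw [Finset.sum_congr rfl fun k _ => h2 k]
    nlinarith [h1]
  set d : Fin n → ℝ := fun k => (w k.succ).im / w0 with hd
  have hdk : ∀ k, d k = (w k.succ).im / w0 := fun k => rfl
  have hdunit : ∑ k, d k ^ 2 = 1 := by
    have h1 : ∀ k : Fin n, d k ^ 2 = (w k.succ).im ^ 2 / w0 ^ 2 := by
      intro k; rw [hdk k, div_pow]
    rw [Finset.sum_congr rfl fun k _ => h1 k, ← Finset.sum_div, hsum]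
    field_simp
  set a := eSp n (⟨n-1, by omega⟩ : Fin n) with haa
  refine ⟨reflMap n (fun k => a k - d k) ∘ₗ boostMap n (Real.log w0),
    isGc_comp (isGc_refl _) (isGc_boost hn0 _), ?_, ?_⟩
  · simp only [LinearMap.comp_apply]
    rw [boost_xi0 hn0, LinearMap.map_smul]
    have hexp : Real.exp (Real.log w0) = w0 := Real.exp_log hwpos
    funext j
    simp only [Pi.smul_apply, smul_eq_mul]
    rcases Fin.eq_zero_or_eq_succ j with rfl | ⟨i, rfl⟩
    · rw [reflMap_apply_zero, xi0_zero hn0, hexp, eq_re_ofReal hwV.1]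
      simp [hw0def]
    · rw [refl_map_unit (eSp_unit _) hdunit (xi0_succ hn0) i, hexp,
        eq_I_mul_im (hwV.2 _ (Fin.succ_ne_zero i)), hdk i]
      push_cast
      field_simp [hw0C]
  · intro hfix
    simp only [LinearMap.comp_apply]
    have hidx : (⟨n-1, by omega⟩ : Fin (n+1)) = (⟨n-2, by omega⟩ : Fin n).succ := by
      simp [Fin.ext_iff]; omega
    have hne0 : (⟨n-1, by omega⟩ : Fin (n+1)) ≠ 0 := by simp [Fin.ext_iff]; omega
    have hnel : (⟨n-1, by omega⟩ : Fin (n+1)) ≠ Fin.last n := by simp [Fin.ext_iff]; omega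
    have h1 : stdC n (⟨n-1, by omega⟩ : Fin (n+1)) 0 = 0 := by simp [stdC, hne0.symm]
    have h2 : stdC n (⟨n-1, by omega⟩ : Fin (n+1)) (Fin.last n) = 0 := by
      simp [stdC, hnel.symm]
    have hb : boostMap n (Real.log w0) (stdC n ⟨n-1, by omega⟩) = stdC n ⟨n-1, by omega⟩ := by
      funext j
      by_cases h : j = 0
      · subst h; rw [boost_apply_zero, h1, h2]; ring
      · by_cases h' : j = Fin.last n
        · subst h'; rw [boost_apply_last hn0, h1, h2]; ring
        · exact boost_apply_other _ _ h h'
    rw [hb]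
    apply refl_fix
    have h3 : ∀ k : Fin n, stdC n (⟨n-1, by omega⟩ : Fin (n+1)) k.succ
        = ((eSp n (⟨n-2, by omega⟩ : Fin n) k : ℝ) : ℂ) := by
      intro k
      rw [hidx, stdC_succ_eq]
    have h4 : (∑ k, ((a k - d k : ℝ) : ℂ) * stdC n (⟨n-1, by omega⟩ : Fin (n+1)) k.succ)
        = ((a (⟨n-2, by omega⟩ : Fin n) - d (⟨n-2, by omega⟩ : Fin n) : ℝ) : ℂ) := by
      rw [Finset.sum_congr rfl fun k _ => by rw [h3 k]]
      exact pair_eSp _ _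
    rw [h4]
    have ha2 : a (⟨n-2, by omega⟩ : Fin n) = 0 := by
      rw [haa]; simp [eSp, Fin.ext_iff]; omega
    have hd2 : d (⟨n-2, by omega⟩ : Fin n) = 0 := by
      rw [hdk]
      have h5 : ((⟨n-2, by omega⟩ : Fin n)).succ = (⟨n-1, by omega⟩ : Fin (n+1)) := hidx.symm
      rw [h5, hfix]
      simp
    rw [ha2, hd2]
    simp
set_option maxHeartbeats 1000000 in
/-- Normal form for de Sitter vectors: g e_{n-1} = p with explicit two-sided inverse. -/
lemma exists_Gp (hn : 2 ≤ n) {p : Fin (n+1) → ℂ} (hp : memiV n p) (hpp : dotC n p p = 1) :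
    ∃ g ginv : (Fin (n+1) → ℂ) →ₗ[ℂ] (Fin (n+1) → ℂ), isGc n g ∧ isGc n ginv ∧
      (∀ v, ginv (g v) = v) ∧ (∀ v, g (ginv v) = v) ∧
      g (stdC n ⟨n-1, by clear hn; omega⟩) = p := by
  have hn0 : 0 < n := by omega
  set t := (p 0).im with ht
  have hsum : ∑ k : Fin n, (p k.succ).re ^ 2 = 1 + t ^ 2 := by
    have h1 := dotC_real_of_memiV hp hp
    rw [hpp] at h1
    have h2 := congrArg Complex.re h1
    simp only [Complex.one_re, Complex.ofReal_re] at h2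
    have h3 : ∀ k : Fin n, (p k.succ).re ^ 2 = (p k.succ).re * (p k.succ).re := fun k => sq _
    rw [Finset.sum_congr rfl fun k _ => h3 k]
    nlinarith [h2]
  set r := Real.sqrt (1 + t ^ 2) with hr
  have hrpos : 0 < r := Real.sqrt_pos.2 (by positivity)
  have hrne : r ≠ 0 := ne_of_gt hrpos
  have hrC : (r : ℂ) ≠ 0 := by exact_mod_cast hrne
  have hrsq : r ^ 2 = 1 + t ^ 2 := Real.sq_sqrt (by positivity)
  set d : Fin n → ℝ := fun k => (p k.succ).re / r with hd
  have hdk : ∀ k, d k = (p k.succ).re / r := fun k => rfl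
  have hdunit : ∑ k, d k ^ 2 = 1 := by
    have h1 : ∀ k : Fin n, d k ^ 2 = (p k.succ).re ^ 2 / r ^ 2 := by
      intro k; rw [hdk k, div_pow]
    rw [Finset.sum_congr rfl fun k _ => h1 k, ← Finset.sum_div, hsum, hrsq]
    field_simp
  set s := Real.arsinh (-t) with hs
  have hsinh : Real.sinh s = -t := Real.sinh_arsinh _
  have hcosh : Real.cosh s = r := by
    rw [hs, Real.cosh_arsinh, hr]
    norm_num
  set e1 := eSp n (⟨n-2, by omega⟩ : Fin n) with he1
  set e2 := eSp n (⟨n-1, by omega⟩ : Fin n) with he2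
  refine ⟨reflMap n (fun k => e2 k - d k) ∘ₗ boostMap n s ∘ₗ reflMap n (fun k => e1 k - e2 k),
    reflMap n (fun k => e1 k - e2 k) ∘ₗ boostMap n (-s) ∘ₗ reflMap n (fun k => e2 k - d k),
    isGc_comp (isGc_refl _) (isGc_comp (isGc_boost hn0 _) (isGc_refl _)),
    isGc_comp (isGc_refl _) (isGc_comp (isGc_boost hn0 _) (isGc_refl _)), ?_, ?_, ?_⟩
  · intro v
    simp only [LinearMap.comp_apply]
    rw [refl_refl, boost_boost hn0, refl_refl]
  · intro v
    simp only [LinearMap.comp_apply]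
    rw [refl_refl]
    have hbb := boost_boost hn0 (-s) (reflMap n (fun k => e2 k - d k) v)
    rw [neg_neg] at hbb
    rw [hbb, refl_refl]
  · simp only [LinearMap.comp_apply]
    have hidx : (⟨n-1, by omega⟩ : Fin (n+1)) = (⟨n-2, by omega⟩ : Fin n).succ := by
      simp [Fin.ext_iff]; omega
    have hlast : Fin.last n = (⟨n-1, by omega⟩ : Fin n).succ := by
      simp [Fin.ext_iff]; omega
    have hne0 : (⟨n-1, by omega⟩ : Fin (n+1)) ≠ 0 := by simp [Fin.ext_iff]; omega
    -- step 1 : first reflection sends e_{n-1} to e_n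
    have hstep1 : reflMap n (fun k => e1 k - e2 k) (stdC n ⟨n-1, by omega⟩)
        = stdC n (Fin.last n) := by
      funext j
      rcases Fin.eq_zero_or_eq_succ j with rfl | ⟨i, rfl⟩
      · rw [reflMap_apply_zero]
        have ha : stdC n (⟨n-1, by omega⟩ : Fin (n+1)) 0 = 0 := by simp [stdC, hne0.symm]
        have hb : stdC n (Fin.last n) 0 = 0 := by simp [stdC, (last_ne_zero hn0).symm]
        rw [ha, hb]
      · have hz : ∀ k : Fin n, stdC n (⟨n-1, by omega⟩ : Fin (n+1)) k.succ
            = (1 : ℂ) * ((e1 k : ℝ) : ℂ) := by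
          intro k
          rw [hidx, stdC_succ_eq, he1, one_mul]
        rw [refl_map_unit (by rw [he1]; exact eSp_unit _) (by rw [he2]; exact eSp_unit _) hz i,
          one_mul, hlast, stdC_succ_eq, he2]
    rw [hstep1]
    -- step 2 : boost sends e_n to I t e_0 + r e_n
    have hstep2 : boostMap n s (stdC n (Fin.last n))
        = (Complex.I * (t : ℂ)) • stdC n 0 + (r : ℂ) • stdC n (Fin.last n) := by
      funext j
      have ha : stdC n (Fin.last n) 0 = 0 := by simp [stdC, (last_ne_zero hn0).symm]
      have hb : stdC n (Fin.last n) (Fin.last n) = 1 := by simp [stdC]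
      by_cases h : j = 0
      · subst h
        rw [boost_apply_zero, ha, hb]
        simp only [Pi.add_apply, Pi.smul_apply, smul_eq_mul]
        have hc : stdC n 0 0 = 1 := by simp [stdC]
        rw [hc, ha, hsinh]
        push_cast
        ring
      · by_cases h' : j = Fin.last n
        · subst h'
          rw [boost_apply_last hn0, ha, hb]
          simp only [Pi.add_apply, Pi.smul_apply, smul_eq_mul]
          have hc : stdC n 0 (Fin.last n) = 0 := by simp [stdC, last_ne_zero hn0]
          rw [hc, hb, hcosh]
          ring
        · rw [boost_apply_other _ _ h h']
          have hc : stdC n (Fin.last n) j = 0 := by simp [stdC, h']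
          have hc0 : stdC n 0 j = 0 := by simp [stdC, h]
          simp only [Pi.add_apply, Pi.smul_apply, smul_eq_mul]
          rw [hc, hc0]
          ring
    rw [hstep2, map_add, LinearMap.map_smul, LinearMap.map_smul]
    -- final reflection
    have hfix0 : reflMap n (fun k => e2 k - d k) (stdC n 0) = stdC n 0 := by
      apply refl_fix
      apply Finset.sum_eq_zero
      intro k _
      have : stdC n 0 k.succ = 0 := by simp [stdC, Fin.succ_ne_zero k]
      rw [this, mul_zero]
    rw [hfix0]
    funext j
    rcases Fin.eq_zero_or_eq_succ j with rfl | ⟨i, rfl⟩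
    · simp only [Pi.add_apply, Pi.smul_apply, smul_eq_mul]
      rw [reflMap_apply_zero]
      have ha : stdC n (Fin.last n) 0 = 0 := by simp [stdC, (last_ne_zero hn0).symm]
      have hc : stdC n 0 0 = 1 := by simp [stdC]
      rw [ha, hc, eq_I_mul_im hp.1, ← ht]
      ring
    · simp only [Pi.add_apply, Pi.smul_apply, smul_eq_mul]
      have hz : ∀ k : Fin n, stdC n (Fin.last n) k.succ = (1 : ℂ) * ((e2 k : ℝ) : ℂ) := by
        intro k
        rw [hlast, stdC_succ_eq, he2, one_mul]
      rw [refl_map_unit (by rw [he2]; exact eSp_unit _) hdunit hz i, one_mul]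
      have hc0 : stdC n 0 i.succ = 0 := by simp [stdC, Fin.succ_ne_zero i]
      rw [hc0, eq_re_ofReal (hp.2 _ (Fin.succ_ne_zero i)), hdk i]
      push_cast
      field_simp [hrC]
      simp
/-! ### Decomposition z = x + iy and closure facts -/

def Vpart (n : ℕ) (z : Fin (n+1) → ℂ) : Fin (n+1) → ℂ :=
  fun j => if j = 0 then ((z 0).re : ℂ) else Complex.I * ((z j).im : ℂ)

lemma memV_Vpart (z : Fin (n+1) → ℂ) : memV n (Vpart n z) := by
  constructor
  · simp [Vpart]
  · intro j hj
    simp [Vpart, hj]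

lemma Vpart_eq {x y : Fin (n+1) → ℂ} (hx : memV n x) (hy : memV n y) :
    Vpart n (x + Complex.I • y) = x := by
  funext j
  by_cases h : j = 0
  · subst h
    simp only [Vpart, if_pos rfl, Pi.add_apply, Pi.smul_apply, smul_eq_mul]
    rw [Complex.ext_iff]
    constructor
    · simp [Complex.add_re, Complex.mul_re, hy.1]
    · simp [hx.1]
  · have him : ((x j + Complex.I * y j)).im = (x j).im := by
      rw [Complex.add_im, Complex.mul_im]
      simp [hy.2 j h]
    simp only [Vpart, if_neg h, Pi.add_apply, Pi.smul_apply, smul_eq_mul]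
    rw [him, ← eq_I_mul_im (hx.2 j h)]

lemma Vpart_decomp (z : Fin (n+1) → ℂ) :
    ∃ y, memV n y ∧ z = Vpart n z + Complex.I • y := by
  refine ⟨fun j => if j = 0 then ((z 0).im : ℂ) else Complex.I * ((-(z j).re : ℝ) : ℂ),
    ⟨?_, ?_⟩, ?_⟩
  · simp
  · intro j hj
    simp only [if_neg hj]
    rw [Complex.mul_re]
    simp
  · funext j
    by_cases h : j = 0
    · subst h
      simp only [Vpart, Pi.add_apply, Pi.smul_apply, smul_eq_mul, if_pos rfl]
      rw [Complex.ext_iff]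
      constructor <;> simp [Complex.mul_re, Complex.mul_im]
    · simp only [Vpart, Pi.add_apply, Pi.smul_apply, smul_eq_mul, if_neg h]
      rw [Complex.ext_iff]
      constructor <;> simp [Complex.mul_re, Complex.mul_im]

lemma memTV_iff (z : Fin (n+1) → ℂ) : memTV n z ↔ memVplus n (Vpart n z) := by
  constructor
  · rintro ⟨x, y, hx, hy, rfl⟩
    rw [Vpart_eq hx.1 hy]
    exact hx
  · intro h
    obtain ⟨y, hy, hdec⟩ := Vpart_decomp z
    exact ⟨Vpart n z, y, h, hy, hdec⟩

lemma Vpart_g {g : (Fin (n+1) → ℂ) →ₗ[ℂ] (Fin (n+1) → ℂ)} (hg : isGc n g)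
    (z : Fin (n+1) → ℂ) : Vpart n (g z) = g (Vpart n z) := by
  obtain ⟨y, hy, hdec⟩ := Vpart_decomp z
  conv_lhs => rw [hdec]
  rw [map_add, LinearMap.map_smul, Vpart_eq (hg.2.2.1 _ (memV_Vpart z)) (hg.2.2.1 _ hy)]

lemma Xi_inv {g : (Fin (n+1) → ℂ) →ₗ[ℂ] (Fin (n+1) → ℂ)} (hg : isGc n g)
    {z : Fin (n+1) → ℂ} (hz : memXi n z) : memXi n (g z) := by
  obtain ⟨⟨x, y, hx, hy, rfl⟩, hdot⟩ := hz
  refine ⟨⟨g x, g y, ⟨hg.2.2.1 _ hx.1, cone_lemma hg hx.1 (le_of_lt hx.2.2) hx.2.1,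
      by rw [hg.2.1]; exact hx.2.2⟩, hg.2.2.1 _ hy, by rw [map_add, LinearMap.map_smul]⟩, ?_⟩
  rw [hg.2.1]
  exact hdot

lemma memiV_iff_Vpart (z : Fin (n+1) → ℂ) : memiV n z ↔ Vpart n z = 0 := by
  constructor
  · intro hz
    funext j
    by_cases h : j = 0
    · subst h; simp [Vpart, hz.1]
    · simp [Vpart, h, hz.2 j h]
  · intro h
    constructor
    · have := congrFun h 0
      simp [Vpart] at this
      exact this
    · intro j hj
      have := congrFun h j
      simp only [Vpart, if_neg hj, Pi.zero_apply, mul_eq_zero] at this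
      rcases this with h1 | h1
      · exact absurd h1 Complex.I_ne_zero
      · exact_mod_cast h1

lemma memV_negI_smul {z : Fin (n+1) → ℂ} (hz : memiV n z) :
    memV n ((-Complex.I) • z) := by
  constructor
  · simp only [Pi.smul_apply, smul_eq_mul]
    rw [Complex.mul_im]
    simp [hz.1]
  · intro j hj
    simp only [Pi.smul_apply, smul_eq_mul]
    rw [Complex.mul_re]
    simp [hz.2 j hj]

lemma memiV_I_smul {y : Fin (n+1) → ℂ} (hy : memV n y) :
    memiV n (Complex.I • y) := by
  constructor
  · simp only [Pi.smul_apply, smul_eq_mul]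
    rw [Complex.mul_re]
    simp [hy.1]
  · intro j hj
    simp only [Pi.smul_apply, smul_eq_mul]
    rw [Complex.mul_im]
    simp [hy.2 j hj]

lemma I_smul_negI_smul (z : Fin (n+1) → ℂ) : Complex.I • ((-Complex.I) • z) = z := by
  rw [smul_smul]
  simp [Complex.I_mul_I]

lemma memiV_g {g : (Fin (n+1) → ℂ) →ₗ[ℂ] (Fin (n+1) → ℂ)} (hg : isGc n g)
    {z : Fin (n+1) → ℂ} (hz : memiV n z) : memiV n (g z) := by
  have h1 : g z = Complex.I • g ((-Complex.I) • z) := by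
    rw [← LinearMap.map_smul, I_smul_negI_smul]
  rw [h1]
  exact memiV_I_smul (hg.2.2.1 _ (memV_negI_smul hz))

lemma continuous_dot : Continuous (fun z : Fin (n+1) → ℂ => dotC n z z) := by
  unfold dotC
  exact continuous_finset_sum _ fun j _ => (continuous_apply j).mul (continuous_apply j)

lemma continuous_Vpart : Continuous (fun z : Fin (n+1) → ℂ => Vpart n z) := by
  apply continuous_pi
  intro j
  by_cases h : j = 0
  · subst h
    simp only [Vpart, if_pos rfl]
    exact Complex.continuous_ofReal.comp (Complex.continuous_re.comp (continuous_apply 0))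
  · simp only [Vpart, if_neg h]
    exact continuous_const.mul
      (Complex.continuous_ofReal.comp (Complex.continuous_im.comp (continuous_apply j)))

lemma closure_Xi_subset :
    closure {z : Fin (n+1) → ℂ | memXi n z}
      ⊆ {z : Fin (n+1) → ℂ | dotC n z z = 1 ∧ 0 ≤ (z 0).re
          ∧ 0 ≤ (dotC n (Vpart n z) (Vpart n z)).re} := by
  apply closure_minimal
  · rintro z ⟨hTV, hdot⟩
    have hplus := (memTV_iff z).1 hTV
    refine ⟨hdot, ?_, le_of_lt hplus.2.2⟩
    have h1 := hplus.2.1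
    simp only [Vpart, if_pos rfl, Complex.ofReal_re] at h1
    exact le_of_lt h1
  · have e : {z : Fin (n+1) → ℂ | dotC n z z = 1 ∧ 0 ≤ (z 0).re
        ∧ 0 ≤ (dotC n (Vpart n z) (Vpart n z)).re}
        = {z : Fin (n+1) → ℂ | dotC n z z = 1} ∩ ({z | 0 ≤ (z 0).re}
          ∩ {z | 0 ≤ (dotC n (Vpart n z) (Vpart n z)).re}) := rfl
    rw [e]
    refine IsClosed.inter (isClosed_eq continuous_dot continuous_const)
      (IsClosed.inter ?_ ?_)
    · exact isClosed_le continuous_const (Complex.continuous_re.comp (continuous_apply 0))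
    · exact isClosed_le continuous_const
        (Complex.continuous_re.comp (continuous_dot.comp continuous_Vpart))

lemma Xi_pos_re {z : Fin (n+1) → ℂ} (hz : memXi n z) : 0 < (z 0).re := by
  have hplus := (memTV_iff z).1 hz.1
  have h1 := hplus.2.1
  simp only [Vpart, if_pos rfl, Complex.ofReal_re] at h1
  exact h1
/-! ### Orbit identities -/

lemma memV_xi0 (hn0 : 0 < n) : memV n (stdC n 0 + Complex.I • stdC n (Fin.last n)) := by
  rw [memV_iff]
  constructor
  · rw [xi0_zero hn0]; simp
  · intro k
    rw [xi0_succ hn0 k, Complex.mul_re]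
    simp

lemma dot_xi0 (hn0 : 0 < n) :
    dotC n (stdC n 0 + Complex.I • stdC n (Fin.last n))
      (stdC n 0 + Complex.I • stdC n (Fin.last n)) = 0 := by
  rw [dotC_add_left, dotC_add_right, dotC_add_right, dotC_smul_left, dotC_smul_left,
    dotC_smul_right, dotC_smul_right]
  rw [dotC_stdC_self, dotC_stdC_left, dotC_stdC_left]
  have h1 : stdC n (Fin.last n) 0 = 0 := by simp [stdC, (last_ne_zero hn0).symm]
  have h2 : stdC n 0 (Fin.last n) = 0 := by simp [stdC, last_ne_zero hn0]
  rw [h1]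
  have h3 : dotC n (stdC n (Fin.last n)) (stdC n (Fin.last n)) = 1 := dotC_stdC_self _
  rw [h3, h2]
  linear_combination Complex.I_sq

lemma xi0_re_zero (hn0 : 0 < n) :
    ((stdC n 0 + Complex.I • stdC n (Fin.last n)) 0).re = 1 := by
  rw [xi0_zero hn0]; simp

/-- Part 4: L^n₊ = G^c · ξ⁰. -/
lemma Ln_eq_orbit (hn : 2 ≤ n) :
    {v : Fin (n+1) → ℂ | memLn n v}
      = orbitGc n (stdC n 0 + Complex.I • stdC n (Fin.last n)) := by
  have hn0 : 0 < n := by omega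
  ext v
  constructor
  · rintro ⟨hV, hdot, hpos⟩
    obtain ⟨k, hk, hkv, -⟩ := exists_k hn hV hdot hpos
    exact ⟨k, hk, hkv.symm⟩
  · rintro ⟨g, hg, rfl⟩
    refine ⟨hg.2.2.1 _ (memV_xi0 hn0), by rw [hg.2.1]; exact dot_xi0 hn0, ?_⟩
    exact cone_lemma hg (memV_xi0 hn0) (by rw [dot_xi0 hn0]; simp) (by rw [xi0_re_zero hn0]; norm_num)

lemma memiV_stdC_idx (hn : 2 ≤ n) : memiV n (stdC n ⟨n-1, by clear hn; omega⟩) := by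
  have hne0 : (⟨n-1, by omega⟩ : Fin (n+1)) ≠ 0 := by simp [Fin.ext_iff]; omega
  constructor
  · simp [stdC, hne0.symm]
  · intro j hj
    by_cases h : j = (⟨n-1, by omega⟩ : Fin (n+1)) <;> simp [stdC, h]

/-- Part 3: dS^n = G^c · e_{n-1}. -/
lemma dS_eq_orbit (hn : 2 ≤ n) :
    {z : Fin (n+1) → ℂ | dotC n z z = 1 ∧ memiV n z}
      = orbitGc n (stdC n ⟨n-1, by clear hn; omega⟩) := by
  ext z
  constructor
  · rintro ⟨hdot, hiv⟩
    obtain ⟨g, ginv, hg, hginv, hgi, hig, hgp⟩ := exists_Gp hn hiv hdot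
    exact ⟨g, hg, hgp.symm⟩
  · rintro ⟨g, hg, rfl⟩
    exact ⟨by rw [hg.2.1]; exact dotC_stdC_self _, memiV_g hg (memiV_stdC_idx hn)⟩

/-- Pair normal form. -/
lemma exists_pair (hn : 2 ≤ n) {x p : Fin (n+1) → ℂ} (hxV : memV n x) (hxx : dotC n x x = 0)
    (hx0 : 0 < (x 0).re) (hp : memiV n p) (hpp : dotC n p p = 1) (hxp : dotC n x p = 0) :
    ∃ g : (Fin (n+1) → ℂ) →ₗ[ℂ] (Fin (n+1) → ℂ), isGc n g ∧
      g ((stdC n 0 + Complex.I • stdC n (Fin.last n)) + stdC n ⟨n-1, by clear hn; omega⟩) = x + p := by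
  obtain ⟨gp, ginv, hgp, hginv, hgi, hig, hgpval⟩ := exists_Gp hn hp hpp
  set w := ginv x with hw
  have hwV : memV n w := hginv.2.2.1 _ hxV
  have hww : dotC n w w = 0 := by rw [hw, hginv.2.1]; exact hxx
  have hwpos : 0 < (w 0).re :=
    cone_lemma hginv hxV (by rw [hxx]; simp) hx0
  have hwperp : w ⟨n-1, by omega⟩ = 0 := by
    have h1 : ginv p = stdC n ⟨n-1, by omega⟩ := by
      rw [← hgpval, hgi]
    have h2 : dotC n w (stdC n ⟨n-1, by omega⟩) = 0 := by
      rw [← h1, hw, hginv.2.1]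
      exact hxp
    rw [dotC_stdC_right] at h2
    exact h2
  obtain ⟨k, hk, hkxi, hkfix⟩ := exists_k hn hwV hww hwpos
  refine ⟨gp ∘ₗ k, isGc_comp hgp hk, ?_⟩
  simp only [LinearMap.comp_apply]
  rw [map_add, hkxi, hkfix hwperp, map_add, hgpval, hw, hig]
/-! ### Closure membership -/

lemma memV_add {z w : Fin (n+1) → ℂ} (hz : memV n z) (hw : memV n w) : memV n (z + w) := by
  constructor
  · simp [Complex.add_im, hz.1, hw.1]
  · intro j hj
    simp [Complex.add_re, hz.2 j hj, hw.2 j hj]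

lemma memV_real_smul (r : ℝ) {z : Fin (n+1) → ℂ} (hz : memV n z) : memV n ((r : ℂ) • z) := by
  constructor
  · simp only [Pi.smul_apply, smul_eq_mul]
    rw [Complex.mul_im]
    simp [hz.1]
  · intro j hj
    simp only [Pi.smul_apply, smul_eq_mul]
    rw [Complex.mul_re]
    simp [hz.2 j hj]

lemma dot_combo (a b : ℂ) (u p : Fin (n+1) → ℂ) :
    dotC n (a • u + b • p) (a • u + b • p)
      = a * a * dotC n u u + 2 * (a * b) * dotC n u p + b * b * dotC n p p := by
  simp only [dotC_add_left, dotC_add_right, dotC_smul_left, dotC_smul_right]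
  rw [dotC_comm p u]
  ring

lemma dot_combo2 (c : ℂ) (x q : Fin (n+1) → ℂ) :
    dotC n (x + c • q) (x + c • q)
      = dotC n x x + 2 * c * dotC n x q + c * c * dotC n q q := by
  simp only [dotC_add_left, dotC_add_right, dotC_smul_left, dotC_smul_right]
  rw [dotC_comm q x]
  ring

lemma dS_mem_closure (hn : 2 ≤ n) {p : Fin (n+1) → ℂ} (hdot : dotC n p p = 1)
    (hiv : memiV n p) : p ∈ closure {z : Fin (n+1) → ℂ | memXi n z} := by
  obtain ⟨g, ginv, hg, -, -, -, hgp⟩ := exists_Gp hn hiv hdot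
  set u := g (stdC n 0) with hu
  have huV : memV n u := hg.2.2.1 _ memV_stdC_zero
  have huu : dotC n u u = 1 := by rw [hu, hg.2.1]; exact dotC_stdC_self _
  have hu0 : 0 < (u 0).re := hg.2.2.2
  have hup : dotC n u p = 0 := by
    rw [← hgp, hu, hg.2.1, dotC_stdC_left]
    have h0 : (⟨n-1, by omega⟩ : Fin (n+1)) ≠ 0 := by simp [Fin.ext_iff]; omega
    simp [stdC, h0.symm]
  set f : ℝ → (Fin (n+1) → ℂ) :=
    fun t => (Real.sin t : ℂ) • u + (Real.cos t : ℂ) • p with hf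
  have hft : ∀ t, f t = (Real.sin t : ℂ) • u + (Real.cos t : ℂ) • p := fun t => rfl
  have hcont : Continuous f := by
    apply Continuous.add
    · exact (Complex.continuous_ofReal.comp Real.continuous_sin).smul continuous_const
    · exact (Complex.continuous_ofReal.comp Real.continuous_cos).smul continuous_const
  have hf0 : f 0 = p := by
    rw [hft]; simp
  have hmem : ∀ t : ℝ, 0 < t → t ≤ 1 → memXi n (f t) := by
    intro t ht ht1
    have hsin : 0 < Real.sin t :=
      Real.sin_pos_of_pos_of_lt_pi ht (lt_of_le_of_lt ht1 (by
        have := Real.pi_gt_three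
        linarith))
    constructor
    · refine ⟨(Real.sin t : ℂ) • u, (Real.cos t : ℂ) • ((-Complex.I) • p),
        ⟨memV_real_smul _ huV, ?_, ?_⟩, memV_real_smul _ (memV_negI_smul hiv), ?_⟩
      · simp only [Pi.smul_apply, smul_eq_mul]
        rw [Complex.mul_re]
        simp only [Complex.ofReal_re, Complex.ofReal_im, zero_mul, sub_zero]
        exact mul_pos hsin hu0
      · rw [dotC_smul_left, dotC_smul_right, huu, mul_one, ← Complex.ofReal_mul]
        simp only [Complex.ofReal_re]
        exact mul_pos hsin hsin
      · have h1 : Complex.I • ((Real.cos t : ℂ) • ((-Complex.I) • p))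
            = (Real.cos t : ℂ) • p := by
          rw [smul_comm, I_smul_negI_smul]
        rw [hft, h1]
    · rw [hft, dot_combo, huu, hup, hdot]
      have hsc : (Real.sin t : ℂ) ^ 2 + (Real.cos t : ℂ) ^ 2 = 1 := by
        rw [← Complex.ofReal_pow, ← Complex.ofReal_pow, ← Complex.ofReal_add,
          Real.sin_sq_add_cos_sq, Complex.ofReal_one]
      linear_combination hsc
  have h1 : Filter.Tendsto (fun k : ℕ => ((k : ℝ) + 1)) Filter.atTop Filter.atTop :=
    Filter.tendsto_atTop_add_const_right _ 1 tendsto_natCast_atTop_atTop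
  have h2 : Filter.Tendsto (fun k : ℕ => ((k : ℝ) + 1)⁻¹) Filter.atTop (nhds 0) :=
    h1.inv_tendsto_atTop
  have h3 : Filter.Tendsto (fun k : ℕ => f (((k : ℝ) + 1)⁻¹)) Filter.atTop (nhds p) := by
    rw [← hf0]
    exact (hcont.tendsto 0).comp h2
  apply mem_closure_of_tendsto h3
  filter_upwards with k
  refine hmem _ (by positivity) ?_
  have hk1 : (1 : ℝ) ≤ (k : ℝ) + 1 := le_add_of_nonneg_left (Nat.cast_nonneg k)
  exact inv_le_one_of_one_le₀ hk1

lemma base_mem_closure (hn : 2 ≤ n) :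
    (stdC n 0 + Complex.I • stdC n (Fin.last n)) + stdC n ⟨n-1, by clear hn; omega⟩
      ∈ closure {z : Fin (n+1) → ℂ | memXi n z} := by
  have hn0 : 0 < n := by omega
  have hne0 : (⟨n-1, by omega⟩ : Fin (n+1)) ≠ 0 := by simp [Fin.ext_iff]; omega
  have hnel : (⟨n-1, by omega⟩ : Fin (n+1)) ≠ Fin.last n := by simp [Fin.ext_iff]; omega
  set q := stdC n (⟨n-1, by omega⟩ : Fin (n+1)) with hq
  set f : ℝ → (Fin (n+1) → ℂ) := fun t =>
    (((1 + t : ℝ) : ℂ) • stdC n 0 + Complex.I • stdC n (Fin.last n))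
      + ((Real.sqrt (1 - 2*t - t^2) : ℝ) : ℂ) • q with hfdef
  have hft : ∀ t, f t = (((1 + t : ℝ) : ℂ) • stdC n 0 + Complex.I • stdC n (Fin.last n))
      + ((Real.sqrt (1 - 2*t - t^2) : ℝ) : ℂ) • q := fun t => rfl
  have hf0 : f 0 = (stdC n 0 + Complex.I • stdC n (Fin.last n)) + q := by
    rw [hft]
    norm_num
  have hcont : Continuous f := by
    apply Continuous.add
    · apply Continuous.add
      · exact (Complex.continuous_ofReal.comp (by continuity)).smul continuous_const
      · exact continuous_const
    · refine (Complex.continuous_ofReal.comp (Real.continuous_sqrt.comp (by continuity))).smul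
        continuous_const
  -- dot products of basis vectors
  have hq0 : q 0 = 0 := by rw [hq]; simp [stdC, hne0.symm]
  have hd00 : dotC n (stdC n 0) (stdC n 0) = 1 := dotC_stdC_self _
  have hdll : dotC n (stdC n (Fin.last n)) (stdC n (Fin.last n)) = 1 := dotC_stdC_self _
  have hdqq : dotC n q q = 1 := dotC_stdC_self _
  have hd0l : dotC n (stdC n 0) (stdC n (Fin.last n)) = 0 := by
    rw [dotC_stdC_left]; simp [stdC, Fin.ext_iff]; omega
  have hmem : ∀ t : ℝ, 0 < t → t ≤ 1/4 → memXi n (f t) := by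
    intro t ht ht1
    have harg : 0 ≤ 1 - 2*t - t^2 := by nlinarith
    have hs2 : Real.sqrt (1 - 2*t - t^2) ^ 2 = 1 - 2*t - t^2 := Real.sq_sqrt harg
    set x : Fin (n+1) → ℂ := ((1 + t : ℝ) : ℂ) • stdC n 0 + Complex.I • stdC n (Fin.last n)
      with hx
    have hxV : memV n x := by
      apply memV_add (memV_real_smul _ memV_stdC_zero)
      constructor
      · simp only [Pi.smul_apply, smul_eq_mul]
        have : stdC n (Fin.last n) 0 = 0 := by simp [stdC, (last_ne_zero hn0).symm]
        rw [this, mul_zero]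
        simp
      · intro j hj
        simp only [Pi.smul_apply, smul_eq_mul]
        by_cases h : j = Fin.last n <;> simp [stdC, h]
    have hxx : dotC n x x = ((2*t + t^2 : ℝ) : ℂ) := by
      rw [hx, dot_combo, hd00, hdll, hd0l]
      push_cast
      linear_combination Complex.I_sq
    have hx0 : 0 < (x 0).re := by
      have : x 0 = ((1 + t : ℝ) : ℂ) := by
        rw [hx]
        simp only [Pi.add_apply, Pi.smul_apply, smul_eq_mul]
        have h1 : stdC n 0 0 = 1 := by simp [stdC]
        have h2 : stdC n (Fin.last n) 0 = 0 := by simp [stdC, (last_ne_zero hn0).symm]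
        rw [h1, h2]
        ring
      rw [this]
      simp only [Complex.ofReal_re]
      linarith
    constructor
    · refine ⟨x, ((Real.sqrt (1 - 2*t - t^2) : ℝ) : ℂ) • ((-Complex.I) • q),
        ⟨hxV, hx0, ?_⟩, memV_real_smul _ (memV_negI_smul (memiV_stdC_idx hn)), ?_⟩
      · rw [hxx]
        simp only [Complex.ofReal_re]
        nlinarith
      · rw [hft]
        have h1 : Complex.I • (((Real.sqrt (1 - 2*t - t^2) : ℝ) : ℂ) • ((-Complex.I) • q))
            = ((Real.sqrt (1 - 2*t - t^2) : ℝ) : ℂ) • q := by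
          rw [smul_comm, I_smul_negI_smul]
        rw [h1, hx]
    · rw [hft, ← hx, dot_combo2, hxx, hdqq]
      have hxq : dotC n x q = 0 := by
        rw [hx, dotC_add_left, dotC_smul_left, dotC_smul_left, dotC_stdC_left, dotC_stdC_left]
        rw [hq]
        have h1 : stdC n (⟨n-1, by omega⟩ : Fin (n+1)) 0 = 0 := by simp [stdC, hne0.symm]
        have h2 : stdC n (⟨n-1, by omega⟩ : Fin (n+1)) (Fin.last n) = 0 := by
          simp [stdC, hnel.symm]
        rw [h1, h2]
        ring
      rw [hxq]
      have h2 : ((Real.sqrt (1 - 2*t - t^2) : ℝ) : ℂ) * ((Real.sqrt (1 - 2*t - t^2) : ℝ) : ℂ)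
          = ((1 - 2*t - t^2 : ℝ) : ℂ) := by
        rw [← Complex.ofReal_mul]
        congr 1
        nlinarith [hs2]
      rw [h2]
      push_cast
      ring
  have h1 : Filter.Tendsto (fun k : ℕ => ((k : ℝ) + 4)) Filter.atTop Filter.atTop :=
    Filter.tendsto_atTop_add_const_right _ 4 tendsto_natCast_atTop_atTop
  have h2 : Filter.Tendsto (fun k : ℕ => ((k : ℝ) + 4)⁻¹) Filter.atTop (nhds 0) :=
    h1.inv_tendsto_atTop
  have h3 : Filter.Tendsto (fun k : ℕ => f (((k : ℝ) + 4)⁻¹)) Filter.atTop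
      (nhds ((stdC n 0 + Complex.I • stdC n (Fin.last n)) + q)) := by
    rw [← hf0]
    exact (hcont.tendsto 0).comp h2
  apply mem_closure_of_tendsto h3
  filter_upwards with k
  refine hmem _ (by positivity) ?_
  have hk4 : (4 : ℝ) ≤ (k : ℝ) + 4 := le_add_of_nonneg_left (Nat.cast_nonneg k)
  rw [show (1:ℝ)/4 = (4:ℝ)⁻¹ by norm_num]
  exact inv_anti₀ (by norm_num) hk4

lemma closure_Xi_inv {g : (Fin (n+1) → ℂ) →ₗ[ℂ] (Fin (n+1) → ℂ)} (hg : isGc n g)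
    {z : Fin (n+1) → ℂ} (hz : z ∈ closure {w : Fin (n+1) → ℂ | memXi n w}) :
    g z ∈ closure {w : Fin (n+1) → ℂ | memXi n w} := by
  have hc : Continuous g := g.continuous_of_finiteDimensional
  have h1 : g z ∈ closure (⇑g '' {w | memXi n w}) :=
    (image_closure_subset_closure_image hc) ⟨z, hz, rfl⟩
  refine closure_mono ?_ h1
  rintro w ⟨v, hv, rfl⟩
  exact Xi_inv hg hv

/-- Lemma 3.7 and (eq:conic): ∂Ξ = dS^n ∪̇ 𝒪 with 𝒪 = G^c·(ξ⁰ + e_{n−1}),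
dS^n = G^c·e_{n−1} and L^n₊ = G^c·ξ⁰, where ξ⁰ = e₀ + i e_n. -/
theorem stmt_7 (n : ℕ) (hn : 2 ≤ n) :
    (closure {z : Fin (n+1) → ℂ | memXi n z} \ {z : Fin (n+1) → ℂ | memXi n z}
      = {z : Fin (n+1) → ℂ | dotC n z z = 1 ∧ memiV n z}
        ∪ orbitGc n ((stdC n 0 + Complex.I • stdC n (Fin.last n)) + stdC n ⟨n - 1, by omega⟩)) ∧
    ({z : Fin (n+1) → ℂ | dotC n z z = 1 ∧ memiV n z}
        ∩ orbitGc n ((stdC n 0 + Complex.I • stdC n (Fin.last n)) + stdC n ⟨n - 1, by omega⟩)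
      = ∅) ∧
    ({z : Fin (n+1) → ℂ | dotC n z z = 1 ∧ memiV n z}
      = orbitGc n (stdC n ⟨n - 1, by omega⟩)) ∧
    ({v : Fin (n+1) → ℂ | memLn n v}
      = orbitGc n (stdC n 0 + Complex.I • stdC n (Fin.last n))) := by
  have hn0 : 0 < n := by omega
  have hVpart_base : ∀ g : (Fin (n+1) → ℂ) →ₗ[ℂ] (Fin (n+1) → ℂ), isGc n g →
      Vpart n (g ((stdC n 0 + Complex.I • stdC n (Fin.last n)) + stdC n ⟨n - 1, by omega⟩))
        = g (stdC n 0 + Complex.I • stdC n (Fin.last n)) := by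
    intro g hg
    rw [Vpart_g hg]
    congr 1
    have hb : (stdC n 0 + Complex.I • stdC n (Fin.last n)) + stdC n (⟨n - 1, by omega⟩ : Fin (n+1))
        = (stdC n 0 + Complex.I • stdC n (Fin.last n))
          + Complex.I • ((-Complex.I) • stdC n ⟨n - 1, by omega⟩) := by
      rw [I_smul_negI_smul]
    rw [hb, Vpart_eq (memV_xi0 hn0) (memV_negI_smul (memiV_stdC_idx hn))]
  refine ⟨?_, ?_, dS_eq_orbit hn, Ln_eq_orbit hn⟩
  · ext z
    constructor
    · rintro ⟨hcl, hnot⟩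
      obtain ⟨hdot, hz0, hQ⟩ := closure_Xi_subset hcl
      set x := Vpart n z with hxdef
      have hxV : memV n x := memV_Vpart z
      have hx0z : (x 0).re = (z 0).re := by simp [hxdef, Vpart]
      have hsumform := dotC_re_of_memV hxV hxV
      have hS : 0 ≤ ∑ j : Fin n, (x j.succ).im * (x j.succ).im :=
        Finset.sum_nonneg fun j _ => mul_self_nonneg _
      have hxx_re : (dotC n x x).re = 0 := by
        by_contra hne
        have hpos : 0 < (dotC n x x).re := lt_of_le_of_ne hQ (Ne.symm hne)
        have hx0 : 0 < (x 0).re := by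
          rcases lt_or_eq_of_le hz0 with h | h
          · rw [hx0z]; exact h
          · exfalso
            rw [hx0z, ← h] at hsumform
            nlinarith
        exact hnot ⟨(memTV_iff z).2 ⟨hxV, hx0, hpos⟩, hdot⟩
      have hxxC : dotC n x x = 0 := by
        rw [Complex.ext_iff]
        exact ⟨by rw [hxx_re]; simp, by rw [dotC_im_of_memV hxV hxV]; simp⟩
      by_cases hx0 : (z 0).re = 0
      · -- de Sitter part
        refine Or.inl ⟨hdot, ?_⟩
        rw [memiV_iff]
        refine ⟨hx0, fun j => ?_⟩
        have h1 : ∑ j : Fin n, (x j.succ).im * (x j.succ).im = 0 := by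
          rw [hx0z, hx0] at hsumform
          rw [hxx_re] at hsumform
          linarith
        have h2 := (Finset.sum_eq_zero_iff_of_nonneg
          (fun i _ => mul_self_nonneg ((x i.succ).im))).1 h1 j (Finset.mem_univ j)
        have h3 : (x j.succ).im = 0 := by nlinarith
        have h4 : (x j.succ).im = (z j.succ).im := by
          simp [hxdef, Vpart, Fin.succ_ne_zero j, Complex.mul_im]
        rw [← h4]
        exact h3
      · -- orbit part
        have hx0' : 0 < (z 0).re := lt_of_le_of_ne hz0 (Ne.symm hx0)
        set p := z - x with hpdef
        have hpiV : memiV n p := by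
          rw [memiV_iff]
          constructor
          · simp [hpdef, hxdef, Vpart, Complex.sub_re]
          · intro j
            simp [hpdef, hxdef, Vpart, Fin.succ_ne_zero j, Complex.sub_im, Complex.mul_im]
        have hzdec : z = x + p := by
          rw [hpdef]; abel
        have hdot2 : dotC n z z = dotC n x x + 2*dotC n x p + dotC n p p := by
          conv_lhs => rw [hzdec]
          rw [dotC_add_left, dotC_add_right, dotC_add_right, dotC_comm p x]
          ring
        rw [hdot, hxxC] at hdot2
        have hxp_re : (dotC n x p).re = 0 := dotC_re_zero_of_memV_memiV hxV hpiV
        have hpp_im : (dotC n p p).im = 0 := by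
          rw [dotC_real_of_memiV hpiV hpiV]; simp
        have hpp : dotC n p p = 1 := by
          rw [Complex.ext_iff]
          constructor
          · have h5 := congrArg Complex.re hdot2
            simp only [Complex.one_re, Complex.add_re, Complex.zero_re, Complex.mul_re,
              Complex.re_ofNat, Complex.im_ofNat, hxp_re] at h5
            simp only [Complex.one_re]
            linarith
          · rw [hpp_im]; simp
        have hxp : dotC n x p = 0 := by
          rw [Complex.ext_iff]
          constructor
          · rw [hxp_re]; simp
          · have h5 := congrArg Complex.im hdot2
            simp only [Complex.one_im, Complex.add_im, Complex.zero_im, Complex.mul_im,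
              Complex.re_ofNat, Complex.im_ofNat, hxp_re, hpp_im] at h5
            simp only [Complex.zero_im]
            linarith
        have hx00 : 0 < (x 0).re := by rw [hx0z]; exact hx0'
        obtain ⟨g, hg, hgval⟩ := exists_pair hn hxV hxxC hx00 hpiV hpp hxp
        exact Or.inr ⟨g, hg, by rw [hgval, ← hzdec]⟩
    · rintro (⟨hdot, hiv⟩ | ⟨g, hg, rfl⟩)
      · refine ⟨dS_mem_closure hn hdot hiv, ?_⟩
        intro hXi
        have h1 := Xi_pos_re hXi
        rw [hiv.1] at h1
        exact lt_irrefl _ h1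
      · refine ⟨closure_Xi_inv hg (base_mem_closure hn), ?_⟩
        intro hXi
        have h1 := (memTV_iff _).1 hXi.1
        rw [hVpart_base g hg] at h1
        have h3 : (dotC n (g (stdC n 0 + Complex.I • stdC n (Fin.last n)))
            (g (stdC n 0 + Complex.I • stdC n (Fin.last n)))).re = 0 := by
          rw [hg.2.1, dot_xi0 hn0]; simp
        have h4 := h1.2.2
        rw [h3] at h4
        exact lt_irrefl _ h4
  · apply Set.eq_empty_iff_forall_notMem.2
    rintro z ⟨⟨hdot, hiv⟩, ⟨g, hg, rfl⟩⟩
    have h1 := hVpart_base g hg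
    have h2 : Vpart n (g ((stdC n 0 + Complex.I • stdC n (Fin.last n))
        + stdC n ⟨n - 1, by omega⟩)) = 0 := (memiV_iff_Vpart _).1 hiv
    have h3 := cone_lemma hg (memV_xi0 hn0) (by rw [dot_xi0 hn0]; simp)
      (by rw [xi0_re_zero hn0]; norm_num)
    rw [← h1, h2] at h3
    simp at h3


end
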